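/- Assume Conjecture 1 holds: for every compact Hausdorff system (f,X,Ω), every étale cover (f',X',Ω') of (f,X,Ω), and every compactification (f_Z,Z,Ω_Z) of (f',X',Ω'), one has h_top(f) ≤ h_top(f_Z). Then whenever (f',X',Ω') is an étale cover of (f,X,Ω), we have h_Ω(f) ≤ h_{Ω'}(f'). -/

import Mathlib

open Set Topology

/-- Topological entropy of a continuous self-map of a compact Hausdorff space, computed
with respect to the unique uniform structure compatible with the topology. -/
noncomputable def htop {Z : Type*} [TopologicalSpace Z] [CompactSpace Z] [T2Space Z]
    (g : Z → Z) : EReal :=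
  @Dynamics.coverEntropy Z uniformSpaceOfCompactR1 g Set.univ

/-- `h_CR(f,Ω)`: the supremum of the topological entropies of the restrictions of `f` to
compact (Hausdorff) invariant subsets, or `0` if there is no such nonempty subset. -/
noncomputable def hCR {X : Type*} [TopologicalSpace X] (f : X → X) : EReal :=
  sSup ({0} ∪ {h : EReal | ∃ (K : Set X) (hK : IsCompact K) (t2K : T2Space K)
    (hf : Set.MapsTo f K K),
    h = @htop K _ (isCompact_iff_compactSpace.mp hK) t2K (hf.restrict f K K)})

/-- `(f', X', Ω')` is an étale cover of `(f, X, Ω)` via `π`: `π` is a continuous surjection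
with finite fibers satisfying `π ∘ f' = f ∘ π` (and `f'` is continuous). -/
def IsEtaleCover {X X' : Type*} [TopologicalSpace X] [TopologicalSpace X']
    (f : X → X) (f' : X' → X') (π : X' → X) : Prop :=
  Continuous f' ∧ Continuous π ∧ Function.Surjective π ∧ (∀ x : X, (π ⁻¹' {x}).Finite) ∧
    π ∘ f' = f ∘ π

/-- `(f_Z, Z, Ω_Z)` is a compactification of `(f', X', Ω')` via the embedding `e`:
`Z` is compact Hausdorff (recorded by the instance arguments), `e` is a dense embedding
and `f_Z` is a continuous extension of `f'` along `e`. -/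
def IsCompactification {X' Z : Type*} [TopologicalSpace X'] [TopologicalSpace Z]
    [CompactSpace Z] [T2Space Z] (f' : X' → X') (fZ : Z → Z) (e : X' → Z) : Prop :=
  Continuous fZ ∧ IsEmbedding e ∧ DenseRange e ∧ fZ ∘ e = e ∘ f'

/-- The set of entropies of all compactifications of all étale covers of `(f, X, Ω)`,
i.e. of all members of the class `𝒜(Ω,f)`. -/
def etaleCompEntropies {X : Type u} [TopologicalSpace X] (f : X → X) : Set EReal :=
  {h : EReal | ∃ (X' : Type u) (tX' : TopologicalSpace X') (f' : X' → X') (π : X' → X),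
    IsEtaleCover f f' π ∧
    ∃ (Z : Type u) (tZ : TopologicalSpace Z) (cZ : CompactSpace Z) (t2Z : T2Space Z)
      (fZ : Z → Z) (e : X' → Z),
      @IsCompactification X' Z tX' tZ cZ t2Z f' fZ e ∧ h = @htop Z tZ cZ t2Z fZ}

/-- The entropy `h_Ω(f)` of an arbitrary topological dynamical system:
the maximum of `h_CR(f,Ω)` and `inf {h_top(f_Z) : (f_Z,Z,Ω_Z) ∈ 𝒜(Ω,f)}`. -/
noncomputable def hOmega {X : Type u} [TopologicalSpace X] (f : X → X) : EReal :=
  max (hCR f) (sInf (etaleCompEntropies f))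

universe u

/-- Conjecture 1: if `(X,Ω)` is compact Hausdorff, `(f',X',Ω')` is an étale cover of
`(f,X,Ω)` and `(f_Z,Z,Ω_Z)` is a compactification of `(f',X',Ω')`, then
`h_top(f) ≤ h_top(f_Z)`. -/
def Conjecture1 : Prop :=
  ∀ (X : Type u) [TopologicalSpace X] [CompactSpace X] [T2Space X] (f : X → X),
    Continuous f →
    ∀ (X' : Type u) [TopologicalSpace X'] (f' : X' → X') (π : X' → X),
      IsEtaleCover f f' π →
      ∀ (Z : Type u) [TopologicalSpace Z] [CompactSpace Z] [T2Space Z]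
        (fZ : Z → Z) (e : X' → Z), IsCompactification f' fZ e →
        htop f ≤ htop fZ

section Aux
open Dynamics

lemma coverEntropy_mono_set {X : Type*} [UniformSpace X] (T : X → X) {F G : Set X} (h : F ⊆ G) :
    coverEntropy T F ≤ coverEntropy T G := by
  refine iSup₂_mono fun U _ ↦ ?_
  refine Filter.limsup_le_limsup (Filter.Eventually.of_forall fun n ↦ ?_)
  refine EReal.monotone_div_right_of_nonneg (Nat.cast_nonneg' n) ?_
  refine ENNReal.log_monotone (ENat.toENNReal_mono ?_)
  exact biInf_mono fun s hs ↦ h.trans hs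

lemma htop_subtype_le {Z : Type*} [TopologicalSpace Z] [CompactSpace Z] [T2Space Z]
    (fZ : Z → Z) {C : Set Z} (hC : IsClosed C) (hm : MapsTo fZ C C) (t2C : T2Space C) :
    @htop C _ (isCompact_iff_compactSpace.mp hC.isCompact) t2C (hm.restrict fZ C C) ≤ htop fZ := by
  haveI : CompactSpace C := isCompact_iff_compactSpace.mp hC.isCompact
  letI uZ : UniformSpace Z := uniformSpaceOfCompactR1
  have hsem : Function.Semiconj (Subtype.val : C → Z) (hm.restrict fZ C C) fZ :=
    fun x ↦ hm.val_restrict_apply x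
  have h1 : @coverEntropy Z uZ fZ (Subtype.val '' (univ : Set C))
      = @coverEntropy C (uZ.comap Subtype.val) (hm.restrict fZ C C) univ :=
    coverEntropy_image_of_comap uZ hsem univ
  have hu : uZ.comap (Subtype.val : C → Z) = uniformSpaceOfCompactR1 :=
    unique_uniformity_of_compact rfl rfl
  calc @htop C _ _ t2C (hm.restrict fZ C C)
      = @coverEntropy Z uZ fZ (Subtype.val '' (univ : Set C)) := by
        rw [h1, hu]; rfl
    _ ≤ @coverEntropy Z uZ fZ univ := coverEntropy_mono_set fZ (subset_univ _)

lemma IsEtaleCover.comp {X X' X'' : Type*} [TopologicalSpace X] [TopologicalSpace X']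
    [TopologicalSpace X''] {f : X → X} {f' : X' → X'} {f'' : X'' → X''}
    {π : X' → X} {π' : X'' → X'} (h : IsEtaleCover f f' π) (h' : IsEtaleCover f' f'' π') :
    IsEtaleCover f f'' (π ∘ π') := by
  obtain ⟨hc1, hc2, hs, hfib, hcomm⟩ := h
  obtain ⟨hc1', hc2', hs', hfib', hcomm'⟩ := h'
  refine ⟨hc1', hc2.comp hc2', hs.comp hs', fun x ↦ ?_, ?_⟩
  · rw [preimage_comp]
    have : π' ⁻¹' (π ⁻¹' {x}) = ⋃ y ∈ π ⁻¹' {x}, π' ⁻¹' {y} := by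
      ext z; simp
    rw [this]
    exact (hfib x).biUnion fun y _ ↦ hfib' y
  · funext z
    calc π (π' (f'' z)) = π (f' (π' z)) := congrArg π (congrFun hcomm' z)
    _ = f (π (π' z)) := congrFun hcomm (π' z)

lemma key {X X'' Z : Type u} [TopologicalSpace X] [TopologicalSpace X'']
    [TopologicalSpace Z] [CompactSpace Z] [T2Space Z]
    (hconj : Conjecture1.{u}) {f : X → X} (hf : Continuous f)
    {f'' : X'' → X''} {ρ : X'' → X} (hcov : IsEtaleCover f f'' ρ)
    {fZ : Z → Z} {e : X'' → Z} (hcptn : IsCompactification f'' fZ e)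
    {K : Set X} (hK : IsCompact K) (t2K : T2Space K) (hfK : MapsTo f K K) :
    @htop K _ (isCompact_iff_compactSpace.mp hK) t2K (hfK.restrict f K K) ≤ htop fZ := by
  haveI : CompactSpace K := isCompact_iff_compactSpace.mp hK
  haveI : T2Space K := t2K
  obtain ⟨hf''c, hρc, hρs, hρfib, hρcomm⟩ := hcov
  obtain ⟨hfZc, hec, hed, hecomm⟩ := hcptn
  set K'' : Set X'' := ρ ⁻¹' K with hK''def
  have hmK'' : MapsTo f'' K'' K'' := by
    intro x hx
    have : ρ (f'' x) = f (ρ x) := congrFun hρcomm x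
    simp only [hK''def, mem_preimage] at *
    rw [this]; exact hfK hx
  -- the restricted covering map
  set p : K'' → K := fun x ↦ ⟨ρ x.val, x.prop⟩ with hpdef
  have hcov' : IsEtaleCover (hfK.restrict f K K) (hmK''.restrict f'' K'' K'') p := by
    refine ⟨hf''c.restrict _, (hρc.comp continuous_subtype_val).subtype_mk _, ?_, ?_, ?_⟩
    · rintro ⟨k, hk⟩
      obtain ⟨x, hx⟩ := hρs k
      exact ⟨⟨x, by simp [hK''def, hx, hk]⟩, Subtype.ext hx⟩
    · intro k
      have : p ⁻¹' {k} ⊆ Subtype.val ⁻¹' (ρ ⁻¹' {(k : X)}) := by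
        rintro x hx
        simp only [mem_preimage, mem_singleton_iff] at *
        exact congrArg Subtype.val hx
      exact (((hρfib (k : X)).preimage (Subtype.val_injective.injOn))).subset this
    · funext x
      apply Subtype.ext
      simp only [Function.comp_apply, hpdef, MapsTo.val_restrict_apply]
      exact congrFun hρcomm x.val
  -- the compactification of the restricted cover
  set C : Set Z := closure (e '' K'') with hCdef
  have hCclosed : IsClosed C := isClosed_closure
  have hstep : MapsTo fZ (e '' K'') (e '' K'') := by
    rintro _ ⟨x, hx, rfl⟩
    exact ⟨f'' x, hmK'' hx, (congrFun hecomm x).symm⟩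
  have hmC : MapsTo fZ C C := hstep.closure hfZc
  haveI : CompactSpace C := isCompact_iff_compactSpace.mp hCclosed.isCompact
  set eC : K'' → C := Set.codRestrict (fun x : K'' ↦ e x.val) C
    (fun x ↦ subset_closure ⟨x.val, x.prop, rfl⟩) with heCdef
  have hcpt' : IsCompactification (hmK''.restrict f'' K'' K'') (hmC.restrict fZ C C) eC := by
    refine ⟨hfZc.restrict _, (hec.comp IsEmbedding.subtypeVal).codRestrict _ _, ?_, ?_⟩
    · intro z
      rw [closure_subtype]
      have : Subtype.val '' (range eC) = e '' K'' := by
        ext w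
        constructor
        · rintro ⟨_, ⟨x, rfl⟩, rfl⟩; exact ⟨x.val, x.prop, rfl⟩
        · rintro ⟨x, hx, rfl⟩; exact ⟨eC ⟨x, hx⟩, ⟨⟨x, hx⟩, rfl⟩, rfl⟩
      rw [this]
      exact z.prop
    · funext x
      apply Subtype.ext
      simp only [Function.comp_apply, heCdef, Set.val_codRestrict_apply,
        MapsTo.val_restrict_apply]
      exact congrFun hecomm x.val
  have h1 := hconj K (hfK.restrict f K K) (hf.restrict hfK) K'' (hmK''.restrict f'' K'' K'') p
    hcov' C (hmC.restrict fZ C C) eC hcpt'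
  exact h1.trans (htop_subtype_le fZ hCclosed hmC inferInstance)

end Aux

/-- Assuming Conjecture 1, if `(f',X',Ω')` is an étale cover of `(f,X,Ω)` then
`h_Ω(f) ≤ h_{Ω'}(f')`. -/
theorem stmt_6 (hconj : Conjecture1.{u}) {X X' : Type u}
    [TopologicalSpace X] [TopologicalSpace X']
    (f : X → X) (f' : X' → X') (π : X' → X) (hf : Continuous f)
    (hcover : IsEtaleCover f f' π) :
    hOmega f ≤ hOmega f' := by
  unfold hOmega
  apply max_le
  · refine sSup_le ?_
    rintro h (hh | ⟨K, hK, t2K, hfK, rfl⟩)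
    · rcases hh with rfl
      exact le_max_of_le_left (le_sSup (Set.mem_union_left _ rfl))
    · refine le_max_of_le_right (le_sInf ?_)
      rintro a ⟨X'', tX'', f'', π', hcov', Z, tZ, cZ, t2Z, fZ, e, hcpt, rfl⟩
      exact key hconj hf (hcover.comp hcov') hcpt hK t2K hfK
  · refine le_max_of_le_right (sInf_le_sInf ?_)
    rintro a ⟨X'', tX'', f'', π', hcov', rest⟩
    exact ⟨X'', tX'', f'', π ∘ π', hcover.comp hcov', rest⟩
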